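/- Let λ be an uncountable regular cardinal. Then d(λ) ≤ d_cl(λ)^ℵ₀: if D is a family of functions λ → λ dominating with respect to the club-filter ordering <_cl, then there is a family of size at most |D|^ℵ₀ that is dominating with respect to <*. In particular, given increasing f_n ∈ λ^λ and clubs C_n ⊆ C_{n-1} witnessing domination as in the construction, every g₀ is eventually bounded by the pointwise supremum of countably many members of the closure of D under countable pointwise suprema. -/

import Mathlib

open Cardinal

/-- Eventual domination: `f <* g` iff `f β < g β` for all sufficiently large `β`. -/
def almostLt {T : Type*} [LinearOrder T] (f g : T → T) : Prop :=
  ∃ γ : T, ∀ β : T, γ < β → f β < g β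

/-- `C` is a club: unbounded, and closed under limits (every limit point belongs to `C`). -/
def IsClubIn {T : Type*} [LinearOrder T] (C : Set T) : Prop :=
  (∀ x : T, ∃ y ∈ C, x < y) ∧
  ∀ x : T, (∃ y : T, y < x) → (∀ y : T, y < x → ∃ z ∈ C, y < z ∧ z < x) → x ∈ C

/-- Club domination: `f <_cl g` iff `f < g` pointwise on some club. -/
def clubLt {T : Type*} [LinearOrder T] (f g : T → T) : Prop :=
  ∃ C : Set T, IsClubIn C ∧ ∀ α ∈ C, f α < g α

/-- The bounding number of `(T → T, r)`: the least size of a family with no single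
`r`-upper bound. -/
noncomputable def bFun (T : Type*) [LinearOrder T] (r : (T → T) → (T → T) → Prop) : Cardinal :=
  sInf {c : Cardinal | ∃ U : Set (T → T), (∀ g : T → T, ∃ f ∈ U, ¬ r f g) ∧ #U = c}

/-- The dominating number of `(T → T, r)`: the least size of an `r`-dominating family. -/
noncomputable def dFun (T : Type*) [LinearOrder T] (r : (T → T) → (T → T) → Prop) : Cardinal :=
  sInf {c : Cardinal | ∃ D : Set (T → T), (∀ f : T → T, ∃ g ∈ D, r f g) ∧ #D = c}

section Aux

open Set

variable {T : Type*} [LinearOrder T] [Nonempty T] [WellFoundedLT T]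

open Classical in
/-- Least upper bound (junk value if unbounded). -/
noncomputable def lub (S : Set T) : T :=
  if h : (upperBounds S).Nonempty then
    (IsWellFounded.wf (α := T) (r := (· < ·))).min (upperBounds S) h
  else Classical.arbitrary T

theorem lub_ub {S : Set T} (h : BddAbove S) : ∀ x ∈ S, x ≤ lub S := by
  intro x hx
  rw [lub, dif_pos (show (upperBounds S).Nonempty from h)]
  exact WellFounded.min_mem _ (upperBounds S) h hx

theorem lub_le {S : Set T} {b : T} (h : b ∈ upperBounds S) : lub S ≤ b := by
  rw [lub, dif_pos ⟨b, h⟩]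
  exact not_lt.1 (WellFounded.not_lt_min _ (upperBounds S) h)

open Classical in
/-- Least element of `C` above `x` (junk value if none). -/
noncomputable def nxt (C : Set T) (x : T) : T :=
  if h : {y | y ∈ C ∧ x < y}.Nonempty then
    (IsWellFounded.wf (α := T) (r := (· < ·))).min _ h
  else Classical.arbitrary T

theorem nxt_mem {C : Set T} (hC : ∀ z : T, ∃ y ∈ C, z < y) (x : T) :
    nxt C x ∈ C ∧ x < nxt C x := by
  have h : {y | y ∈ C ∧ x < y}.Nonempty := by
    obtain ⟨y, hy, hxy⟩ := hC x; exact ⟨y, hy, hxy⟩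
  rw [nxt, dif_pos h]
  exact WellFounded.min_mem _ _ h

theorem nxt_le {C : Set T} {x z : T} (hz : z ∈ C) (hxz : x < z) : nxt C x ≤ z := by
  have h : {y | y ∈ C ∧ x < y}.Nonempty := ⟨z, hz, hxz⟩
  rw [nxt, dif_pos h]
  exact not_lt.1 (WellFounded.not_lt_min _ {y | y ∈ C ∧ x < y} (x := z) ⟨hz, hxz⟩)

/-- Monotone hull of a function. -/
noncomputable def mhull (f : T → T) : T → T := fun x => lub (f '' Iic x)

theorem le_mhull (hsm : ∀ (f : T → T) (x : T), BddAbove (f '' Set.Iic x))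
    {f : T → T} {a x : T} (h : a ≤ x) : f a ≤ mhull f x :=
  lub_ub (hsm f x) _ ⟨a, h, rfl⟩

theorem mhull_mono (hsm : ∀ (f : T → T) (x : T), BddAbove (f '' Set.Iic x))
    {f : T → T} {x y : T} (h : x ≤ y) : mhull f x ≤ mhull f y := by
  apply lub_le
  rintro b ⟨a, ha, rfl⟩
  exact le_mhull hsm (ha.trans h)

omit [Nonempty T] [WellFoundedLT T] in
theorem isClubIn_univ (hnomax : ∀ x : T, ∃ y : T, x < y) : IsClubIn (Set.univ : Set T) :=
  ⟨fun x => by obtain ⟨y, hy⟩ := hnomax x; exact ⟨y, trivial, hy⟩,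
   fun x _ _ => trivial⟩

theorem isClubIn_iInter (hct : ∀ S : Set T, S.Countable → BddAbove S)
    (C : ℕ → Set T) (hC : ∀ n, IsClubIn (C n)) : IsClubIn (⋂ n, C n) := by
  constructor
  · intro x
    let u : ℕ → T := fun k =>
      Nat.rec x (fun k uk => lub ((fun m => nxt (C m) uk) '' Iic k)) k
    have hbk : ∀ k : ℕ, BddAbove ((fun m => nxt (C m) (u k)) '' Iic k) := fun k =>
      ((Set.finite_Iic k).image _).bddAbove
    have husucc : ∀ k, u (k + 1) = lub ((fun m => nxt (C m) (u k)) '' Iic k) := fun k => rfl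
    have hnle : ∀ k m, m ≤ k → nxt (C m) (u k) ≤ u (k + 1) := by
      intro k m hm
      rw [husucc]
      exact lub_ub (hbk k) _ ⟨m, hm, rfl⟩
    have hinc : ∀ k, u k < u (k + 1) := by
      intro k
      exact lt_of_lt_of_le (nxt_mem (hC 0).1 (u k)).2 (hnle k 0 (Nat.zero_le k))
    have hmono : StrictMono u := strictMono_nat_of_lt_succ hinc
    have hbdd : BddAbove (range u) := hct _ (countable_range u)
    set y := lub (range u) with hy
    have hky : ∀ k, u k < y := fun k =>
      lt_of_lt_of_le (hinc k) (lub_ub hbdd _ (mem_range_self (k + 1)))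
    have hymem : ∀ n, y ∈ C n := by
      intro n
      refine (hC n).2 y ⟨u 0, hky 0⟩ ?_
      intro w hw
      have hnub : w ∉ upperBounds (range u) := fun hub => absurd (lub_le hub) (not_le.2 hw)
      have hek : ∃ k, w < u k := by
        by_contra hc
        push_neg at hc
        exact hnub fun z hz => by obtain ⟨k, rfl⟩ := hz; exact hc k
      obtain ⟨k, hk⟩ := hek
      have h1 : w < u (max k n) := lt_of_lt_of_le hk (hmono.monotone (le_max_left k n))
      have hz := nxt_mem (hC n).1 (u (max k n))
      refine ⟨nxt (C n) (u (max k n)), hz.1, lt_trans h1 hz.2, ?_⟩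
      calc nxt (C n) (u (max k n)) ≤ u (max k n + 1) := hnle (max k n) n (le_max_right k n)
        _ < y := hky (max k n + 1)
    exact ⟨y, mem_iInter.2 hymem, hky 0⟩
  · intro x hex hlim
    refine mem_iInter.2 fun n => (hC n).2 x hex fun y hy => ?_
    obtain ⟨z, hz, h1, h2⟩ := hlim y hy
    exact ⟨z, mem_iInter.1 hz n, h1, h2⟩

end Aux

section Main

open Set

variable {T : Type*} [LinearOrder T] [Nonempty T] [WellFoundedLT T]

theorem isClubIn_inter (hct : ∀ S : Set T, S.Countable → BddAbove S)
    {A B : Set T} (hA : IsClubIn A) (hB : IsClubIn B) : IsClubIn (A ∩ B) := by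
  have h : A ∩ B = ⋂ n : ℕ, (if n = 0 then A else B) := by
    ext z
    simp only [mem_inter_iff, mem_iInter]
    constructor
    · rintro ⟨hA, hB⟩ n
      split <;> assumption
    · intro h
      exact ⟨by simpa using h 0, by simpa using h 1⟩
  rw [h]
  refine isClubIn_iInter hct _ fun n => ?_
  split <;> assumption

theorem exists_almost_dom
    (hnomax : ∀ x : T, ∃ y : T, x < y)
    (hct : ∀ S : Set T, S.Countable → BddAbove S)
    (hsm : ∀ (f : T → T) (x : T), BddAbove (f '' Set.Iic x))
    (D : Set (T → T)) (hD : ∀ f : T → T, ∃ g ∈ D, clubLt f g) (g : T → T) :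
    ∃ F : ℕ → (T → T), (∀ n, F n ∈ D) ∧
      almostLt g (fun α => lub (Set.range fun n => mhull (F n) α)) := by
  have huniv : ∀ z : T, ∃ y ∈ (Set.univ : Set T), z < y := by
    intro z; obtain ⟨y, hy⟩ := hnomax z; exact ⟨y, trivial, hy⟩
  have hpick : ∀ gg : T → T, ∃ (h : T → T) (C : Set T),
      h ∈ D ∧ IsClubIn C ∧ ∀ α ∈ C, gg α < h α := by
    intro gg
    obtain ⟨h, hh, C, hC, hlt⟩ := hD gg
    exact ⟨h, C, hh, hC, hlt⟩
  choose fD fC h1 h2 h3 using hpick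
  -- the recursive sequence of states
  let s : ℕ → (T → T) × Set T := fun n =>
    Nat.rec (mhull g, Set.univ)
      (fun _ p => (fun α => nxt Set.univ (mhull p.1 (nxt (p.2 ∩ fC p.1) α)),
        p.2 ∩ fC p.1)) n
  set G : ℕ → T → T := fun n => (s n).1 with hG
  set Cs : ℕ → Set T := fun n => (s n).2 with hCs
  have hG0 : G 0 = mhull g := rfl
  have hCs0 : Cs 0 = Set.univ := rfl
  have hCsucc : ∀ n, Cs (n + 1) = Cs n ∩ fC (G n) := fun n => rfl
  have hGsucc : ∀ n α, G (n + 1) α = nxt Set.univ (mhull (G n) (nxt (Cs (n + 1)) α)) :=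
    fun n α => rfl
  have hclub : ∀ n, IsClubIn (Cs n) := by
    intro n
    induction n with
    | zero => exact isClubIn_univ hnomax
    | succ n ih => rw [hCsucc]; exact isClubIn_inter hct ih (h2 (G n))
  have hanti : ∀ m n, m ≤ n → Cs n ⊆ Cs m := by
    have step : ∀ n, Cs (n + 1) ⊆ Cs n := by
      intro n; rw [hCsucc]; exact inter_subset_left
    intro m n h
    induction h with
    | refl => exact subset_rfl
    | step _ ih => exact (step _).trans ih
  have hglt : ∀ n, ∀ α ∈ Cs (n + 1), G n α < fD (G n) α := by
    intro n α hα
    rw [hCsucc] at hα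
    exact h3 (G n) α hα.2
  have hgle : ∀ n α, g α ≤ G n α := by
    intro n
    induction n with
    | zero => exact fun α => le_mhull hsm le_rfl
    | succ n ih =>
      intro α
      have hn := nxt_mem (hclub (n + 1)).1 α
      calc g α ≤ G n α := ih α
        _ ≤ mhull (G n) (nxt (Cs (n + 1)) α) := le_mhull hsm hn.2.le
        _ ≤ G (n + 1) α := by
            rw [hGsucc]
            exact (nxt_mem huniv _).2.le
  have hkey : ∀ n α β, α < nxt (Cs (n + 1)) β → g α < G (n + 1) β := by
    intro n α β h
    calc g α ≤ G n α := hgle n α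
      _ ≤ mhull (G n) (nxt (Cs (n + 1)) β) := le_mhull hsm h.le
      _ < G (n + 1) β := by rw [hGsucc]; exact (nxt_mem huniv _).2
  have hCC : IsClubIn (⋂ n, Cs n) := isClubIn_iInter hct _ hclub
  set CC := ⋂ n, Cs n with hCCdef
  refine ⟨fun n => fD (G n), fun n => h1 (G n), ?_⟩
  -- the dominating function
  set h : T → T := fun α => lub (Set.range fun n => mhull (fD (G n)) α) with hh
  have hfh : ∀ n α, mhull (fD (G n)) α ≤ h α := fun n α =>
    lub_ub (hct _ (countable_range _)) _ (mem_range_self n)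
  obtain ⟨γ₀, hγ₀, _⟩ := hCC.1 (Classical.arbitrary T)
  refine ⟨γ₀, fun α hα => ?_⟩
  set S : Set T := CC ∩ Iic α with hS
  have hSb : BddAbove S := ⟨α, fun z hz => hz.2⟩
  set β := lub S with hβ
  have hβα : β ≤ α := lub_le fun z hz => hz.2
  have hγβ : γ₀ ≤ β := lub_ub hSb γ₀ ⟨hγ₀, hα.le⟩
  have hβCC : β ∈ CC := by
    by_cases hmem : β ∈ S
    · exact hmem.1
    · refine hCC.2 β ⟨γ₀, lt_of_le_of_ne hγβ fun he => hmem (he ▸ ⟨hγ₀, hα.le⟩)⟩ ?_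
      intro y hy
      have hnub : y ∉ upperBounds S := fun hub => absurd (lub_le hub) (not_le.2 hy)
      have hez : ∃ z ∈ S, y < z := by
        by_contra hc
        push_neg at hc
        exact hnub fun z hz => hc z hz
      obtain ⟨z, hz, hyz⟩ := hez
      exact ⟨z, hz.1, hyz, lt_of_le_of_ne (lub_ub hSb z hz) fun he => hmem (he ▸ hz)⟩
  rcases eq_or_lt_of_le hβα with heq | hlt
  · -- α ∈ CC
    have hαCC : α ∈ CC := heq ▸ hβCC
    have := hglt 0 α (mem_iInter.1 hαCC 1)
    calc g α ≤ G 0 α := hgle 0 α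
      _ < fD (G 0) α := this
      _ ≤ mhull (fD (G 0)) α := le_mhull hsm le_rfl
      _ ≤ h α := hfh 0 α
  · -- β < α
    have hex : ∃ n, α < nxt (Cs (n + 1)) β := by
      by_contra hno
      push_neg at hno
      set τ : ℕ → T := fun n => nxt (Cs (n + 1)) β with hτ
      have hτm : ∀ n, τ n ∈ Cs (n + 1) ∧ β < τ n := fun n => nxt_mem (hclub (n + 1)).1 β
      have hτmono : Monotone τ := by
        apply monotone_nat_of_le_succ
        intro n
        exact nxt_le (hanti (n + 1) (n + 2) (by omega) (hτm (n + 1)).1) (hτm (n + 1)).2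
      have hτbd : BddAbove (range τ) := hct _ (countable_range τ)
      set τs := lub (range τ) with hτs
      have hτub : ∀ n, τ n ≤ τs := fun n => lub_ub hτbd _ (mem_range_self n)
      have hτα : τs ≤ α := lub_le (by rintro z ⟨n, rfl⟩; exact hno n)
      have hτCC : τs ∈ CC := by
        by_cases hconst : ∃ N, τ N = τs
        · obtain ⟨N, hN⟩ := hconst
          refine mem_iInter.2 fun m => ?_
          have : τ (max N m) = τs :=
            le_antisymm (hτub _) (hN ▸ hτmono (le_max_left N m))
          exact this ▸ hanti m (max N m + 1) (by omega) (hτm (max N m)).1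
        · push_neg at hconst
          have hτlt : ∀ n, τ n < τs := fun n => lt_of_le_of_ne (hτub n) (hconst n)
          refine mem_iInter.2 fun m => ?_
          refine (hclub m).2 τs ⟨τ 0, hτlt 0⟩ ?_
          intro y hy
          have hnub : y ∉ upperBounds (range τ) :=
            fun hub => absurd (lub_le hub) (not_le.2 hy)
          have hek : ∃ n, y < τ n := by
            by_contra hc
            push_neg at hc
            exact hnub fun z hz => by obtain ⟨n, rfl⟩ := hz; exact hc n
          obtain ⟨n, hn⟩ := hek
          refine ⟨τ (max n m), hanti m (max n m + 1) (by omega) (hτm (max n m)).1,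
            lt_of_lt_of_le hn (hτmono (le_max_left n m)), hτlt _⟩
      have : τs ≤ β := lub_ub hSb τs ⟨hτCC, hτα⟩
      exact absurd (lt_of_lt_of_le (hτm 0).2 (hτub 0)) (not_lt.2 this)
    obtain ⟨n, hn⟩ := hex
    calc g α < G (n + 1) β := hkey n α β hn
      _ < fD (G (n + 1)) β := hglt (n + 1) β (mem_iInter.1 hβCC (n + 2))
      _ ≤ mhull (fD (G (n + 1))) β := le_mhull hsm le_rfl
      _ ≤ mhull (fD (G (n + 1))) α := mhull_mono hsm hβα
      _ ≤ h α := hfh (n + 1) α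

end Main

theorem dFun_le_dFun_club_pow_aleph0 (κ : Cardinal) (hκ : κ.IsRegular) (huncount : ℵ₀ < κ) :
    dFun κ.ord.ToType almostLt ≤ dFun κ.ord.ToType clubLt ^ ℵ₀ := by
  set T := κ.ord.ToType with hT
  haveI : IsWellOrder T (· < ·) := isWellOrder_lt
  haveI : Nonempty T := Ordinal.toType_nonempty_iff_ne_zero.2 (by
    simp only [ne_eq, Cardinal.ord_eq_zero]
    exact fun h => absurd (h ▸ huncount) (by simp))
  -- every small subset is strictly bounded
  have hbd : ∀ S : Set T, #S < κ → ∃ a : T, ∀ b ∈ S, b < a := by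
    intro S hS
    have hw : #S < Ordinal.cof (Ordinal.type ((· < ·) : T → T → Prop)) := by
      rw [Ordinal.type_toType, hκ.cof_eq]
      exact hS
    by_contra hc
    push_neg at hc
    exact absurd (Order.cof_le (s := S) hc) (not_le.2 (by simpa using hw))
  have hnomax : ∀ x : T, ∃ y : T, x < y := by
    intro x
    obtain ⟨a, ha⟩ := hbd {x} (by
      rw [Cardinal.mk_singleton]
      exact lt_trans Cardinal.one_lt_aleph0 huncount)
    exact ⟨a, ha x rfl⟩
  have hct : ∀ S : Set T, S.Countable → BddAbove S := by
    intro S hS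
    obtain ⟨a, ha⟩ := hbd S (lt_of_le_of_lt (@Cardinal.mk_le_aleph0 _ hS.to_subtype) huncount)
    exact ⟨a, fun z hz => (ha z hz).le⟩
  have hsm : ∀ (f : T → T) (x : T), BddAbove (f '' Set.Iic x) := by
    intro f x
    have hIic : #(Set.Iic x) < κ := by
      rw [← Set.Iio_insert]
      refine lt_of_le_of_lt Cardinal.mk_insert_le ?_
      exact Cardinal.add_lt_of_lt huncount.le (Cardinal.mk_Iio_ord_toType x)
        (lt_trans Cardinal.one_lt_aleph0 huncount)
    obtain ⟨a, ha⟩ := hbd _ (lt_of_le_of_lt Cardinal.mk_image_le hIic)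
    exact ⟨a, fun z hz => (ha z hz).le⟩
  have huniv : ∀ z : T, ∃ y ∈ (Set.univ : Set T), z < y := by
    intro z; obtain ⟨y, hy⟩ := hnomax z; exact ⟨y, trivial, hy⟩
  -- a club-dominating family realizing the club dominating number
  have hne : {c : Cardinal | ∃ D : Set (T → T), (∀ f : T → T, ∃ g ∈ D, clubLt f g) ∧
      Cardinal.mk D = c}.Nonempty := by
    refine ⟨_, Set.univ, fun f => ⟨fun α => nxt Set.univ (f α), trivial, Set.univ,
      isClubIn_univ hnomax, fun α _ => (nxt_mem huniv (f α)).2⟩, rfl⟩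
  obtain ⟨D, hDdom, hDcard⟩ := csInf_mem hne
  -- the family of countable sups of monotone hulls
  set D' : Set (T → T) :=
    (fun F : ℕ → (T → T) => fun α => lub (Set.range fun n => mhull (F n) α)) ''
      {F : ℕ → (T → T) | ∀ n, F n ∈ D} with hD'
  have hdom' : ∀ g : T → T, ∃ h ∈ D', almostLt g h := by
    intro g
    obtain ⟨F, hF, ha⟩ := exists_almost_dom hnomax hct hsm D hDdom g
    exact ⟨_, ⟨F, hF, rfl⟩, ha⟩
  have hle : dFun T almostLt ≤ #D' := csInf_le' ⟨D', hdom', rfl⟩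
  refine hle.trans ?_
  have h1 : #D' ≤ #{F : ℕ → (T → T) | ∀ n, F n ∈ D} := Cardinal.mk_image_le
  have h2 : #{F : ℕ → (T → T) | ∀ n, F n ∈ D} = #D ^ ℵ₀ := by
    have e : {F : ℕ → (T → T) // ∀ n, F n ∈ D} ≃ (ULift.{_} ℕ → ↥D) :=
      (Equiv.subtypePiEquivPi (p := fun _ (b : T → T) => b ∈ D)).trans
        (Equiv.arrowCongr Equiv.ulift.symm (Equiv.refl _))
    calc #{F : ℕ → (T → T) | ∀ n, F n ∈ D} = #(ULift ℕ → ↥D) := Cardinal.mk_congr e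
      _ = #↥D ^ #(ULift ℕ) := (Cardinal.power_def _ _).symm
      _ = #↥D ^ ℵ₀ := by rw [Cardinal.mk_uLift, Cardinal.mk_nat, Cardinal.lift_aleph0]
  have hd : dFun T clubLt = #↥D := hDcard.symm
  rw [hd]
  exact h1.trans h2.le
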